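/- Let (X, χ) be a T-algebra, regard X as a set of generators for itself via id_X (whose free T-extension is χ), and let I := {x ∈ X | x is isolated with respect to id_X}, with inclusion ι : I → X. Assume I is finite and that ι is a set of generators for (X, χ) (i.e., ι^♯ = χ ∘ T ι is a split epimorphism of sets). Then: (1) for every set of generators g : G → X with G finite, card I ≤ card G; and (2) every minimal set of generators g : G → X with G finite satisfies card G = card I. -/

import Mathlib

open CategoryTheory

universe u

/-- `g : G → X` is a set of generators for the `T`-algebra `(X, χ)`:
its free `T`-extension `g^♯ = χ ∘ T g` is a split epimorphism of sets. -/
def IsGeneratorSet (T : Monad (Type u)) {G X : Type u}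
    (χ : T.toFunctor.obj X → X) (g : G → X) : Prop :=
  ∃ s : X → T.toFunctor.obj G, (χ ∘ T.toFunctor.map (TypeCat.ofHom g)) ∘ s = id

/-- `r : G` is redundant with respect to `g : G → X`: there is `U ∈ T(G∖{r})` with
`(g ∘ ι_r)^♯(U) = g r`.  Elements that are not redundant are called isolated. -/
def Redundant (T : Monad (Type u)) {G X : Type u}
    (χ : T.toFunctor.obj X → X) (g : G → X) (r : G) : Prop :=
  ∃ U : T.toFunctor.obj {x : G // x ≠ r},
    χ (T.toFunctor.map (TypeCat.ofHom (fun u : {x : G // x ≠ r} => g u.val)) U) = g r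

/-- Every isolated element of `X` is in the range of any set of generators. -/
theorem isolated_mem_range (T : Monad (Type u)) {G X : Type u}
    (χ : T.toFunctor.obj X → X) (g : G → X) (hg : IsGeneratorSet T χ g)
    (x : X) (hx : ¬ Redundant T χ (id : X → X) x) : ∃ r : G, g r = x := by
  obtain ⟨s, hs⟩ := hg
  by_contra h
  push_neg at h
  apply hx
  refine ⟨T.toFunctor.map (TypeCat.ofHom (fun r : G => (⟨g r, h r⟩ : {y : X // y ≠ x}))) (s x), ?_⟩
  have h2 := FunctorToTypes.map_comp_apply T.toFunctor
    (f := TypeCat.ofHom (fun r : G => (⟨g r, h r⟩ : {y : X // y ≠ x})))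
    (g := TypeCat.ofHom (fun u : {y : X // y ≠ x} => (id u.val : X))) (s x)
  rw [← h2]
  exact congrFun hs x

/-- Let `(X, χ)` be a `T`-algebra, regard `X` as a set of generators for
itself via `id`, and let `I` be its isolated elements, with inclusion `ι : I → X`.
If `I` is finite and `ι` is a set of generators for `(X, χ)`, then (1) every finite set
of generators `g : G → X` satisfies `card I ≤ card G`, and (2) every finite *minimal* set
of generators `g : G → X` satisfies `card G = card I`. -/
theorem isolated_generators_minimal_card
    (T : Monad (Type u)) (X : Type u) (χ : T.toFunctor.obj X → X)
    (hunit : χ ∘ T.η.app X = id)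
    (hassoc : χ ∘ T.μ.app X = χ ∘ T.toFunctor.map (TypeCat.ofHom χ))
    (hIfin : Finite {x : X // ¬ Redundant T χ (id : X → X) x})
    (hIgen : IsGeneratorSet T χ
      (fun i : {x : X // ¬ Redundant T χ (id : X → X) x} => (i : X))) :
    (∀ (G : Type u) (g : G → X), Finite G → IsGeneratorSet T χ g →
        Nat.card {x : X // ¬ Redundant T χ (id : X → X) x} ≤ Nat.card G)
    ∧ (∀ (G : Type u) (g : G → X), Finite G → IsGeneratorSet T χ g →
        (∀ r : G, ¬ Redundant T χ g r) →
        Nat.card G = Nat.card {x : X // ¬ Redundant T χ (id : X → X) x}) := by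
  classical
  have part1 : ∀ (G : Type u) (g : G → X), Finite G → IsGeneratorSet T χ g →
      Nat.card {x : X // ¬ Redundant T χ (id : X → X) x} ≤ Nat.card G := by
    intro G g hGfin hg
    choose f hf using fun i : {x : X // ¬ Redundant T χ (id : X → X) x} =>
      isolated_mem_range T χ g hg i.val i.prop
    have hfinj : Function.Injective f := by
      intro i j hij
      apply Subtype.ext
      rw [← hf i, ← hf j, hij]
    exact Nat.card_le_card_of_injective f hfinj
  refine ⟨part1, ?_⟩
  intro G g hGfin hg hmin
  -- a minimal set of generators is injective
  have hginj : Function.Injective g := by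
    intro r r' hrr'
    by_contra hne
    apply hmin r
    refine ⟨T.η.app _ (⟨r', fun h => hne h.symm⟩ : {x : G // x ≠ r}), ?_⟩
    rw [← FunctorToTypes.naturality T.η
      (TypeCat.ofHom (fun u : {x : G // x ≠ r} => g u.val)) (⟨r', fun h => hne h.symm⟩ : {x : G // x ≠ r})]
    exact (congrFun hunit (g r')).trans hrr'.symm
  -- every element of a minimal set of generators is isolated
  have himg : ∀ r : G, ¬ Redundant T χ (id : X → X) (g r) := by
    intro r hred
    obtain ⟨sI, hsI⟩ := hIgen
    choose f hf using fun i : {x : X // ¬ Redundant T χ (id : X → X) x} =>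
      isolated_mem_range T χ g hg i.val i.prop
    have hfne : ∀ i : {x : X // ¬ Redundant T χ (id : X → X) x}, f i ≠ r := by
      intro i h
      apply i.prop
      have : i.val = g r := by rw [← hf i, h]
      rwa [this]
    apply hmin r
    refine ⟨T.toFunctor.map
      (TypeCat.ofHom (fun i : {x : X // ¬ Redundant T χ (id : X → X) x} => (⟨f i, hfne i⟩ : {x : G // x ≠ r})))
      (sI (g r)), ?_⟩
    have h2 := FunctorToTypes.map_comp_apply T.toFunctor
      (f := TypeCat.ofHom (fun i : {x : X // ¬ Redundant T χ (id : X → X) x} =>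
        (⟨f i, hfne i⟩ : {x : G // x ≠ r})))
      (g := TypeCat.ofHom (fun u : {x : G // x ≠ r} => g u.val)) (sI (g r))
    rw [← h2]
    have hcomp : (fun i : {x : X // ¬ Redundant T χ (id : X → X) x} => g (f i)) =
        (fun i : {x : X // ¬ Redundant T χ (id : X → X) x} => (i : X)) :=
      funext fun i => hf i
    show χ (T.toFunctor.map
      (TypeCat.ofHom (fun i : {x : X // ¬ Redundant T χ (id : X → X) x} => g (f i))) (sI (g r))) = g r
    rw [hcomp]
    exact congrFun hsI (g r)
  have hemb : Function.Injective
      (fun r : G => (⟨g r, himg r⟩ : {x : X // ¬ Redundant T χ (id : X → X) x})) := by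
    intro r r' h
    exact hginj (congrArg Subtype.val h)
  exact le_antisymm (Nat.card_le_card_of_injective _ hemb) (part1 G g hGfin hg)
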